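/- Let n = n₁ + n₂ with n₁, n₂ ≥ 2, and let φ₁ ∈ Aut(F_{n₁}), φ₂ ∈ Aut(F_{n₂}). Then j(φ₁, φ₂) is an automorphism of F_n, and its twisted cocycle value decomposes block-diagonally: τ₁^{(n)}(j(φ₁, φ₂))(X_k) = (ι₁ ⊗ ι₁)(τ₁^{(n₁)}(φ₁)(X_k)) for 1 ≤ k ≤ n₁, and τ₁^{(n)}(j(φ₁, φ₂))(X_{n₁+k}) = (ι₂ ⊗ ι₂)(τ₁^{(n₂)}(φ₂)(X_k)) for 1 ≤ k ≤ n₂. (This is the cocycle-level form of the primitivity relation ι^* h_p = ϖ₁^* h_p + ϖ₂^* h_p.) -/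

import Mathlib

noncomputable section
open scoped TensorProduct


/-- `H = Fin n →₀ ℤ`, the first integral homology of the free group. -/
abbrev Hz (n : ℕ) : Type := Fin n →₀ ℤ

/-- The standard basis vector `X i`. -/
def Xz (n : ℕ) (i : Fin n) : Hz n := Finsupp.single i 1

/-- `H ⊗ℤ H`. -/
abbrev HHz (n : ℕ) : Type := Hz n ⊗[ℤ] Hz n

/-- The degree ≤ 2 truncation of the Magnus algebra: underlying set `H × (H ⊗ H)`,
with multiplication `(u,s)·(u',s') = (u+u', s+s'+u⊗u')`. -/
def Mn (n : ℕ) : Type := Hz n × HHz n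

namespace Mn

variable {n : ℕ}

instance : Group (Mn n) where
  mul a b := (a.1 + b.1, a.2 + b.2 + a.1 ⊗ₜ[ℤ] b.1)
  one := ((0 : Hz n), (0 : HHz n))
  inv a := (-a.1, -a.2 + a.1 ⊗ₜ[ℤ] a.1)
  mul_assoc a b c := by
    show (_, _) = (_, _)
    refine Prod.ext (add_assoc _ _ _) ?_
    show a.2 + b.2 + a.1 ⊗ₜ[ℤ] b.1 + c.2 + (a.1 + b.1) ⊗ₜ[ℤ] c.1
        = a.2 + (b.2 + c.2 + b.1 ⊗ₜ[ℤ] c.1) + a.1 ⊗ₜ[ℤ] (b.1 + c.1)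
    rw [TensorProduct.add_tmul, TensorProduct.tmul_add]
    abel
  one_mul a := by
    show ((0 : Hz n) + a.1, (0 : HHz n) + a.2 + (0 : Hz n) ⊗ₜ[ℤ] a.1) = a
    rw [TensorProduct.zero_tmul]
    simp <;> rfl
  mul_one a := by
    show (a.1 + 0, a.2 + (0:HHz n) + a.1 ⊗ₜ[ℤ] (0 : Hz n)) = a
    rw [TensorProduct.tmul_zero]
    simp <;> rfl
  inv_mul_cancel a := by
    show (-a.1 + a.1, (-a.2 + a.1 ⊗ₜ[ℤ] a.1) + a.2 + (-a.1) ⊗ₜ[ℤ] a.1) = ((0:Hz n), (0:HHz n))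
    rw [TensorProduct.neg_tmul]
    refine Prod.ext (by simp) ?_
    show _ = (0 : HHz n)
    abel

end Mn

/-- The truncated standard Magnus expansion `Θ : F_n →* M_n`, `x_i ↦ (X_i, 0)`. -/
def Theta (n : ℕ) : FreeGroup (Fin n) →* Mn n :=
  FreeGroup.lift fun i => ((Xz n i, 0) : Mn n)

/-- The abelianization map `a : F_n → H`, the first component of `Θ`. -/
def aMap (n : ℕ) (γ : FreeGroup (Fin n)) : Hz n := (Theta n γ).1

/-- `θ₂`, the second component of the truncated Magnus expansion. -/
def theta2 (n : ℕ) (γ : FreeGroup (Fin n)) : HHz n := (Theta n γ).2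


/-- The embedding `F_{n₁} → F_{n₁+n₂}`, `x_k ↦ x_k`. -/
def embL (n₁ n₂ : ℕ) : FreeGroup (Fin n₁) →* FreeGroup (Fin (n₁ + n₂)) :=
  FreeGroup.map (Fin.castAdd n₂)

/-- The embedding `F_{n₂} → F_{n₁+n₂}`, `x_k ↦ x_{n₁+k}`. -/
def embR (n₁ n₂ : ℕ) : FreeGroup (Fin n₂) →* FreeGroup (Fin (n₁ + n₂)) :=
  FreeGroup.map (Fin.natAdd n₁)

/-- The juxtaposition endomorphism `j(φ₁, φ₂)` of `F_{n₁+n₂}`. -/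
def jmap (n₁ n₂ : ℕ) (φ₁ : MulAut (FreeGroup (Fin n₁)))
    (φ₂ : MulAut (FreeGroup (Fin n₂))) :
    FreeGroup (Fin (n₁ + n₂)) →* FreeGroup (Fin (n₁ + n₂)) :=
  FreeGroup.lift (Fin.addCases
    (fun k => embL n₁ n₂ (φ₁ (FreeGroup.of k)))
    (fun k => embR n₁ n₂ (φ₂ (FreeGroup.of k))))

/-- The additive embedding `H^{(n₁)} → H^{(n₁+n₂)}`, `X_k ↦ X_k`. -/
def iotaL (n₁ n₂ : ℕ) : Hz n₁ →ₗ[ℤ] Hz (n₁ + n₂) :=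
  Finsupp.lmapDomain ℤ ℤ (Fin.castAdd n₂)

/-- The additive embedding `H^{(n₂)} → H^{(n₁+n₂)}`, `X_k ↦ X_{n₁+k}`. -/
def iotaR (n₁ n₂ : ℕ) : Hz n₂ →ₗ[ℤ] Hz (n₁ + n₂) :=
  Finsupp.lmapDomain ℤ ℤ (Fin.natAdd n₁)

section Aux

variable {m n : ℕ}

/-- The group hom `Mn m →* Mn n` induced by a linear map. -/
def Mmap (ι : Hz m →ₗ[ℤ] Hz n) : Mn m →* Mn n where
  toFun a := (ι a.1, TensorProduct.map ι ι a.2)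
  map_one' := by
    show (ι 0, TensorProduct.map ι ι 0) = ((0 : Hz n), (0 : HHz n))
    simp
  map_mul' a b := by
    show (ι (a.1 + b.1), TensorProduct.map ι ι (a.2 + b.2 + a.1 ⊗ₜ[ℤ] b.1))
      = (ι a.1 + ι b.1, TensorProduct.map ι ι a.2 + TensorProduct.map ι ι b.2
          + ι a.1 ⊗ₜ[ℤ] ι b.1)
    simp [TensorProduct.map_tmul]

lemma Theta_of (i : Fin n) : Theta n (FreeGroup.of i) = ((Xz n i, 0) : Mn n) := by
  simp [Theta]
  exact FreeGroup.lift_apply_of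

lemma Theta_natural (f : Fin m → Fin n) (ι : Hz m →ₗ[ℤ] Hz n)
    (h : ∀ i, ι (Xz m i) = Xz n (f i)) (γ : FreeGroup (Fin m)) :
    Theta n (FreeGroup.map f γ) = Mmap ι (Theta m γ) := by
  have : (Theta n).comp (FreeGroup.map f) = (Mmap ι).comp (Theta m) := by
    apply FreeGroup.ext_hom
    intro a
    simp only [MonoidHom.comp_apply, FreeGroup.map.of, Theta_of]
    show ((Xz n (f a), 0) : Mn n) = (ι (Xz m a), TensorProduct.map ι ι 0)
    simp [h a]
  exact DFunLike.congr_fun this γ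

lemma iotaL_Xz (n₁ n₂ : ℕ) (k : Fin n₁) :
    iotaL n₁ n₂ (Xz n₁ k) = Xz (n₁ + n₂) (Fin.castAdd n₂ k) := by
  simp [iotaL, Xz, Finsupp.mapDomain_single]

lemma iotaR_Xz (n₁ n₂ : ℕ) (k : Fin n₂) :
    iotaR n₁ n₂ (Xz n₂ k) = Xz (n₁ + n₂) (Fin.natAdd n₁ k) := by
  simp [iotaR, Xz, Finsupp.mapDomain_single]

lemma aMap_embL (n₁ n₂ : ℕ) (γ : FreeGroup (Fin n₁)) :
    aMap (n₁ + n₂) (embL n₁ n₂ γ) = iotaL n₁ n₂ (aMap n₁ γ) := by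
  have := Theta_natural (Fin.castAdd n₂) (iotaL n₁ n₂) (iotaL_Xz n₁ n₂) γ
  exact congrArg Prod.fst this

lemma aMap_embR (n₁ n₂ : ℕ) (γ : FreeGroup (Fin n₂)) :
    aMap (n₁ + n₂) (embR n₁ n₂ γ) = iotaR n₁ n₂ (aMap n₂ γ) := by
  have := Theta_natural (Fin.natAdd n₁) (iotaR n₁ n₂) (iotaR_Xz n₁ n₂) γ
  exact congrArg Prod.fst this

lemma theta2_embL (n₁ n₂ : ℕ) (γ : FreeGroup (Fin n₁)) :
    theta2 (n₁ + n₂) (embL n₁ n₂ γ)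
      = TensorProduct.map (iotaL n₁ n₂) (iotaL n₁ n₂) (theta2 n₁ γ) := by
  have := Theta_natural (Fin.castAdd n₂) (iotaL n₁ n₂) (iotaL_Xz n₁ n₂) γ
  exact congrArg Prod.snd this

lemma theta2_embR (n₁ n₂ : ℕ) (γ : FreeGroup (Fin n₂)) :
    theta2 (n₁ + n₂) (embR n₁ n₂ γ)
      = TensorProduct.map (iotaR n₁ n₂) (iotaR n₁ n₂) (theta2 n₂ γ) := by
  have := Theta_natural (Fin.natAdd n₁) (iotaR n₁ n₂) (iotaR_Xz n₁ n₂) γ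
  exact congrArg Prod.snd this

lemma jmap_of_left (n₁ n₂ : ℕ) (φ₁ : MulAut (FreeGroup (Fin n₁)))
    (φ₂ : MulAut (FreeGroup (Fin n₂))) (k : Fin n₁) :
    jmap n₁ n₂ φ₁ φ₂ (FreeGroup.of (Fin.castAdd n₂ k)) = embL n₁ n₂ (φ₁ (FreeGroup.of k)) := by
  simp [jmap]

lemma jmap_of_right (n₁ n₂ : ℕ) (φ₁ : MulAut (FreeGroup (Fin n₁)))
    (φ₂ : MulAut (FreeGroup (Fin n₂))) (k : Fin n₂) :
    jmap n₁ n₂ φ₁ φ₂ (FreeGroup.of (Fin.natAdd n₁ k)) = embR n₁ n₂ (φ₂ (FreeGroup.of k)) := by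
  simp [jmap]

lemma jmap_embL (n₁ n₂ : ℕ) (φ₁ : MulAut (FreeGroup (Fin n₁)))
    (φ₂ : MulAut (FreeGroup (Fin n₂))) (γ : FreeGroup (Fin n₁)) :
    jmap n₁ n₂ φ₁ φ₂ (embL n₁ n₂ γ) = embL n₁ n₂ (φ₁ γ) := by
  have : (jmap n₁ n₂ φ₁ φ₂).comp (embL n₁ n₂)
      = (embL n₁ n₂).comp φ₁.toMonoidHom := by
    apply FreeGroup.ext_hom
    intro a
    simp [embL, jmap_of_left]
  simpa using DFunLike.congr_fun this γ

lemma jmap_embR (n₁ n₂ : ℕ) (φ₁ : MulAut (FreeGroup (Fin n₁)))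
    (φ₂ : MulAut (FreeGroup (Fin n₂))) (γ : FreeGroup (Fin n₂)) :
    jmap n₁ n₂ φ₁ φ₂ (embR n₁ n₂ γ) = embR n₁ n₂ (φ₂ γ) := by
  have : (jmap n₁ n₂ φ₁ φ₂).comp (embR n₁ n₂)
      = (embR n₁ n₂).comp φ₂.toMonoidHom := by
    apply FreeGroup.ext_hom
    intro a
    simp [embR, jmap_of_right]
  simpa using DFunLike.congr_fun this γ

lemma jmap_jmap (n₁ n₂ : ℕ) (φ₁ ψ₁ : MulAut (FreeGroup (Fin n₁)))
    (φ₂ ψ₂ : MulAut (FreeGroup (Fin n₂))) (γ : FreeGroup (Fin (n₁ + n₂))) :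
    jmap n₁ n₂ φ₁ φ₂ (jmap n₁ n₂ ψ₁ ψ₂ γ) = jmap n₁ n₂ (φ₁ * ψ₁) (φ₂ * ψ₂) γ := by
  have : (jmap n₁ n₂ φ₁ φ₂).comp (jmap n₁ n₂ ψ₁ ψ₂)
      = jmap n₁ n₂ (φ₁ * ψ₁) (φ₂ * ψ₂) := by
    apply FreeGroup.ext_hom
    intro a
    induction a using Fin.addCases with
    | left k => simp [jmap_of_left, jmap_embL]
    | right k => simp [jmap_of_right, jmap_embR]
  exact DFunLike.congr_fun this γ

lemma jmap_one (n₁ n₂ : ℕ) (γ : FreeGroup (Fin (n₁ + n₂))) :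
    jmap n₁ n₂ 1 1 γ = γ := by
  have : jmap n₁ n₂ 1 1 = MonoidHom.id _ := by
    apply FreeGroup.ext_hom
    intro a
    induction a using Fin.addCases with
    | left k => simp [jmap_of_left, embL]
    | right k => simp [jmap_of_right, embR]
  simpa using DFunLike.congr_fun this γ

end Aux

lemma aMap_of (n : ℕ) (i : Fin n) : aMap n (FreeGroup.of i) = Xz n i := by
  simp [aMap, Theta_of]

lemma theta2_of (n : ℕ) (i : Fin n) : theta2 n (FreeGroup.of i) = 0 := by
  simp [theta2, Theta_of]

theorem stmt6 (n₁ n₂ : ℕ) (hn₁ : 2 ≤ n₁) (hn₂ : 2 ≤ n₂)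
    (Φ₁ : MulAut (FreeGroup (Fin n₁)) → (Hz n₁ →+ Hz n₁))
    (hΦ₁ : ∀ (φ : MulAut (FreeGroup (Fin n₁))) (γ : FreeGroup (Fin n₁)),
      Φ₁ φ (aMap n₁ γ) = aMap n₁ (φ γ))
    (τ₁ : MulAut (FreeGroup (Fin n₁)) → (Hz n₁ →+ HHz n₁))
    (hτ₁ : ∀ (φ : MulAut (FreeGroup (Fin n₁))) (γ : FreeGroup (Fin n₁)),
      τ₁ φ (aMap n₁ γ) = theta2 n₁ γ -
        (TensorProduct.map (Φ₁ φ).toIntLinearMap (Φ₁ φ).toIntLinearMap)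
          (theta2 n₁ (φ⁻¹ γ)))
    (Φ₂ : MulAut (FreeGroup (Fin n₂)) → (Hz n₂ →+ Hz n₂))
    (hΦ₂ : ∀ (φ : MulAut (FreeGroup (Fin n₂))) (γ : FreeGroup (Fin n₂)),
      Φ₂ φ (aMap n₂ γ) = aMap n₂ (φ γ))
    (τ₂ : MulAut (FreeGroup (Fin n₂)) → (Hz n₂ →+ HHz n₂))
    (hτ₂ : ∀ (φ : MulAut (FreeGroup (Fin n₂))) (γ : FreeGroup (Fin n₂)),
      τ₂ φ (aMap n₂ γ) = theta2 n₂ γ -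
        (TensorProduct.map (Φ₂ φ).toIntLinearMap (Φ₂ φ).toIntLinearMap)
          (theta2 n₂ (φ⁻¹ γ)))
    (Φ : MulAut (FreeGroup (Fin (n₁ + n₂))) → (Hz (n₁ + n₂) →+ Hz (n₁ + n₂)))
    (hΦ : ∀ (φ : MulAut (FreeGroup (Fin (n₁ + n₂)))) (γ : FreeGroup (Fin (n₁ + n₂))),
      Φ φ (aMap (n₁ + n₂) γ) = aMap (n₁ + n₂) (φ γ))
    (τ : MulAut (FreeGroup (Fin (n₁ + n₂))) → (Hz (n₁ + n₂) →+ HHz (n₁ + n₂)))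
    (hτ : ∀ (φ : MulAut (FreeGroup (Fin (n₁ + n₂)))) (γ : FreeGroup (Fin (n₁ + n₂))),
      τ φ (aMap (n₁ + n₂) γ) = theta2 (n₁ + n₂) γ -
        (TensorProduct.map (Φ φ).toIntLinearMap (Φ φ).toIntLinearMap)
          (theta2 (n₁ + n₂) (φ⁻¹ γ)))
    (φ₁ : MulAut (FreeGroup (Fin n₁))) (φ₂ : MulAut (FreeGroup (Fin n₂))) :
    Function.Bijective (jmap n₁ n₂ φ₁ φ₂) ∧
    ∀ ψ : MulAut (FreeGroup (Fin (n₁ + n₂))),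
      (∀ γ : FreeGroup (Fin (n₁ + n₂)), ψ γ = jmap n₁ n₂ φ₁ φ₂ γ) →
      (∀ k : Fin n₁,
        τ ψ (Xz (n₁ + n₂) (Fin.castAdd n₂ k)) =
          (TensorProduct.map (iotaL n₁ n₂) (iotaL n₁ n₂)) (τ₁ φ₁ (Xz n₁ k))) ∧
      (∀ k : Fin n₂,
        τ ψ (Xz (n₁ + n₂) (Fin.natAdd n₁ k)) =
          (TensorProduct.map (iotaR n₁ n₂) (iotaR n₁ n₂)) (τ₂ φ₂ (Xz n₂ k))) := by
  have hLI : Function.LeftInverse (jmap n₁ n₂ φ₁⁻¹ φ₂⁻¹) (jmap n₁ n₂ φ₁ φ₂) := by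
    intro γ; rw [jmap_jmap, inv_mul_cancel, inv_mul_cancel, jmap_one]
  have hRI : Function.RightInverse (jmap n₁ n₂ φ₁⁻¹ φ₂⁻¹) (jmap n₁ n₂ φ₁ φ₂) := by
    intro γ; rw [jmap_jmap, mul_inv_cancel, mul_inv_cancel, jmap_one]
  refine ⟨⟨hLI.injective, hRI.surjective⟩, ?_⟩
  intro ψ hψ
  have hψinv : ∀ γ, ψ⁻¹ γ = jmap n₁ n₂ φ₁⁻¹ φ₂⁻¹ γ := by
    intro γ
    apply ψ.injective
    rw [MulAut.apply_inv_self, hψ, hRI γ]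
  constructor
  · intro k
    -- commutation of Φ ψ with iotaL
    have hcomm : (Φ ψ).toIntLinearMap ∘ₗ iotaL n₁ n₂
        = iotaL n₁ n₂ ∘ₗ (Φ₁ φ₁).toIntLinearMap := by
      apply Finsupp.lhom_ext'
      intro a
      apply LinearMap.ext
      intro b
      have hb : (Finsupp.single a b : Hz n₁) = b • Xz n₁ a := by
        simp [Xz, Finsupp.smul_single]
      simp only [LinearMap.comp_apply, Finsupp.lsingle_apply, hb, map_zsmul]
      congr 1
      show (Φ ψ) (iotaL n₁ n₂ (Xz n₁ a)) = iotaL n₁ n₂ ((Φ₁ φ₁) (Xz n₁ a))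
      rw [iotaL_Xz, ← aMap_of, hΦ, hψ, jmap_of_left, aMap_embL, ← hΦ₁, aMap_of]
    have key : τ ψ (Xz (n₁ + n₂) (Fin.castAdd n₂ k))
        = theta2 (n₁ + n₂) (FreeGroup.of (Fin.castAdd n₂ k)) -
          (TensorProduct.map (Φ ψ).toIntLinearMap (Φ ψ).toIntLinearMap)
            (theta2 (n₁ + n₂) (ψ⁻¹ (FreeGroup.of (Fin.castAdd n₂ k)))) := by
      rw [← aMap_of, hτ]
    rw [key, theta2_of, hψinv, jmap_of_left, theta2_embL, ← aMap_of n₁ k,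
      hτ₁ φ₁ (FreeGroup.of k), theta2_of]
    rw [← LinearMap.comp_apply, ← TensorProduct.map_comp, hcomm, TensorProduct.map_comp,
      LinearMap.comp_apply]
    simp
  · intro k
    have hcomm : (Φ ψ).toIntLinearMap ∘ₗ iotaR n₁ n₂
        = iotaR n₁ n₂ ∘ₗ (Φ₂ φ₂).toIntLinearMap := by
      apply Finsupp.lhom_ext'
      intro a
      apply LinearMap.ext
      intro b
      have hb : (Finsupp.single a b : Hz n₂) = b • Xz n₂ a := by
        simp [Xz, Finsupp.smul_single]
      simp only [LinearMap.comp_apply, Finsupp.lsingle_apply, hb, map_zsmul]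
      congr 1
      show (Φ ψ) (iotaR n₁ n₂ (Xz n₂ a)) = iotaR n₁ n₂ ((Φ₂ φ₂) (Xz n₂ a))
      rw [iotaR_Xz, ← aMap_of, hΦ, hψ, jmap_of_right, aMap_embR, ← hΦ₂, aMap_of]
    have key : τ ψ (Xz (n₁ + n₂) (Fin.natAdd n₁ k))
        = theta2 (n₁ + n₂) (FreeGroup.of (Fin.natAdd n₁ k)) -
          (TensorProduct.map (Φ ψ).toIntLinearMap (Φ ψ).toIntLinearMap)
            (theta2 (n₁ + n₂) (ψ⁻¹ (FreeGroup.of (Fin.natAdd n₁ k)))) := by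
      rw [← aMap_of, hτ]
    rw [key, theta2_of, hψinv, jmap_of_right, theta2_embR, ← aMap_of n₂ k,
      hτ₂ φ₂ (FreeGroup.of k), theta2_of]
    rw [← LinearMap.comp_apply, ← TensorProduct.map_comp, hcomm, TensorProduct.map_comp,
      LinearMap.comp_apply]
    simp
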